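/- Let (C, Σ) be a localiser where Σ admits a calculus of right fractions. Then for any objects c, d of C, the canonical map colim_{(c'→c) ∈ Σ↓c} C(c', d) → C[Σ⁻¹](c, d), sending a pair (s : c' → c in Σ, f : c' → d) to Q(f) ∘ Q(s)⁻¹, is a bijection. -/

import Mathlib

open CategoryTheory

namespace RightFractionColimit

variable {C : Type*} [Category C] (W : MorphismProperty C) (c d : C)

/-- The disjoint union `Σ_{(s : c' → c) ∈ Σ↓c} C(c', d)` indexing the colimit
`colim_{(c'→c) ∈ Σ↓c} C(c', d)`. -/
def Index : Type _ :=
  Σ' (a : Over c) (_ : W a.hom), (a.left ⟶ d)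

/-- The relation generating the colimit: a pair `(b, f_b)` is identified with its
restriction `(a, α.left ≫ f_b)` along any morphism `α : a ⟶ b` of `Σ↓c`; the quotient
`Quot (rel)` by (the equivalence relation generated by) this relation is exactly the
colimit of the functor `(Σ↓c)ᵒᵖ ⥤ Set`, `(c' → c) ↦ C(c', d)`. -/
def rel : Index W c d → Index W c d → Prop :=
  fun p q => ∃ α : p.1 ⟶ q.1, p.2.2 = α.left ≫ q.2.2

/-- The canonical map sending `(s : c' → c, f : c' → d)` to `Q(f) ∘ Q(s)⁻¹`. -/
noncomputable def toHom (p : Index W c d) : W.Q.obj c ⟶ W.Q.obj d :=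
  (Localization.isoOfHom W.Q W p.1.hom p.2.1).inv ≫ W.Q.map p.2.2

/-- The right fraction associated to an index. -/
def fraction (p : Index W c d) : W.RightFraction c d :=
  ⟨p.1.hom, p.2.1, p.2.2⟩

lemma toHom_eq_map (p : Index W c d) :
    toHom W c d p = (fraction W c d p).map W.Q (Localization.inverts W.Q W) := by
  have := Localization.inverts W.Q W _ p.2.1
  simp [toHom, fraction, MorphismProperty.RightFraction.map, Localization.isoOfHom]

/-- If `W` admits a calculus of right fractions then the canonical map
`colim_{(c'→c) ∈ Σ↓c} C(c', d) → C[W⁻¹](c, d)`, `(s, f) ↦ Q(f) ∘ Q(s)⁻¹`, is a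
bijection: any function on the quotient presenting the colimit which is induced by
the canonical map on representatives is bijective. -/
theorem bijective_colimitDesc [W.HasRightCalculusOfFractions]
    (Φ : Quot (rel W c d) → (W.Q.obj c ⟶ W.Q.obj d))
    (hΦ : ∀ p : Index W c d, Φ (Quot.mk _ p) = toHom W c d p) :
    Function.Bijective Φ := by
  constructor
  · intro x y hxy
    obtain ⟨p, rfl⟩ := Quot.exists_rep x
    obtain ⟨q, rfl⟩ := Quot.exists_rep y
    rw [hΦ, hΦ, toHom_eq_map, toHom_eq_map,
      MorphismProperty.RightFraction.map_eq_iff] at hxy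
    obtain ⟨Z, t₁, t₂, hs, hf, ht⟩ := hxy
    set r : Index W c d := ⟨Over.mk (t₁ ≫ p.1.hom), ht, t₁ ≫ p.2.2⟩ with hr
    have h₁ : rel W c d r p := ⟨Over.homMk t₁ rfl, rfl⟩
    have h₂ : rel W c d r q := by
      refine ⟨Over.homMk t₂ ?_, hf⟩
      dsimp [r]
      exact hs.symm
    calc Quot.mk (rel W c d) p = Quot.mk _ r := (Quot.sound h₁).symm
      _ = Quot.mk _ q := Quot.sound h₂
  · intro g
    obtain ⟨φ, rfl⟩ := Localization.exists_rightFraction W.Q W g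
    refine ⟨Quot.mk _ ⟨Over.mk φ.s, φ.hs, φ.f⟩, ?_⟩
    refine (hΦ _).trans ((toHom_eq_map W c d _).trans ?_)
    rfl

end RightFractionColimit
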